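/- arXiv:1411.2063 — 2 statements merged into one kernel-verified Lean document; each statement's English description precedes it below -/
import Mathlib

section
/- Every C³ entropy of the 2d compressible potential flow system (i.e., every η(ρ,v,w) satisfying all compatibility relations: π'η_{vv} = ρη_{ρρ}, π'η_{ww} = ρη_{ρρ}, η_{vw} = 0, ρη_{ρw} = w·η_{vv}, ρη_{ρv} = v·η_{ww}) is of the form η = C⁰ + C^ρ·ρ + C^v·v + C^w·w + C^E·E(ρ,v,w), where E(ρ,v,w) = ∫^ρ π(r) dr + ρ(v²+w²)/2 and C⁰, C^ρ, C^v, C^w, C^E are constants. -/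
/-- Partial derivative in `ρ`. -/
noncomputable def d1 (f : ℝ × ℝ × ℝ → ℝ) (p : ℝ × ℝ × ℝ) : ℝ := fderiv ℝ f p (1, 0, 0)

/-- Partial derivative in `v`. -/
noncomputable def d2 (f : ℝ × ℝ × ℝ → ℝ) (p : ℝ × ℝ × ℝ) : ℝ := fderiv ℝ f p (0, 1, 0)

/-- Partial derivative in `w`. -/
noncomputable def d3 (f : ℝ × ℝ × ℝ → ℝ) (p : ℝ × ℝ × ℝ) : ℝ := fderiv ℝ f p (0, 0, 1)

section aux

variable {f : ℝ × ℝ × ℝ → ℝ}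

lemma contDiff_pd {m n : WithTop ℕ∞} (hf : ContDiff ℝ n f) (hmn : m + 1 ≤ n) (u : ℝ × ℝ × ℝ) :
    ContDiff ℝ m (fun p => fderiv ℝ f p u) :=
  (hf.fderiv_right hmn).clm_apply contDiff_const

lemma contDiff_d1 {m n : WithTop ℕ∞} (hf : ContDiff ℝ n f) (hmn : m + 1 ≤ n) :
    ContDiff ℝ m (d1 f) := contDiff_pd hf hmn _
lemma contDiff_d2 {m n : WithTop ℕ∞} (hf : ContDiff ℝ n f) (hmn : m + 1 ≤ n) :
    ContDiff ℝ m (d2 f) := contDiff_pd hf hmn _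
lemma contDiff_d3 {m n : WithTop ℕ∞} (hf : ContDiff ℝ n f) (hmn : m + 1 ≤ n) :
    ContDiff ℝ m (d3 f) := contDiff_pd hf hmn _

lemma hasDerivAt_slice1 {ρ v w : ℝ} (hf : DifferentiableAt ℝ f (ρ, v, w)) :
    HasDerivAt (fun t => f (t, v, w)) (d1 f (ρ, v, w)) ρ := by
  have hl : HasDerivAt (fun t : ℝ => ((t, v, w) : ℝ × ℝ × ℝ)) (1, 0, 0) ρ :=
    (hasDerivAt_id ρ).prodMk ((hasDerivAt_const ρ v).prodMk (hasDerivAt_const ρ w))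
  exact hf.hasFDerivAt.comp_hasDerivAt ρ hl

lemma hasDerivAt_slice2 {ρ v w : ℝ} (hf : DifferentiableAt ℝ f (ρ, v, w)) :
    HasDerivAt (fun t => f (ρ, t, w)) (d2 f (ρ, v, w)) v := by
  have hl : HasDerivAt (fun t : ℝ => ((ρ, t, w) : ℝ × ℝ × ℝ)) (0, 1, 0) v :=
    (hasDerivAt_const v ρ).prodMk ((hasDerivAt_id v).prodMk (hasDerivAt_const v w))
  exact hf.hasFDerivAt.comp_hasDerivAt v hl

lemma hasDerivAt_slice3 {ρ v w : ℝ} (hf : DifferentiableAt ℝ f (ρ, v, w)) :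
    HasDerivAt (fun t => f (ρ, v, t)) (d3 f (ρ, v, w)) w := by
  have hl : HasDerivAt (fun t : ℝ => ((ρ, v, t) : ℝ × ℝ × ℝ)) (0, 0, 1) w :=
    (hasDerivAt_const w ρ).prodMk ((hasDerivAt_const w v).prodMk (hasDerivAt_id w))
  exact hf.hasFDerivAt.comp_hasDerivAt w hl

/-- symmetry of second partials for C² functions -/
lemma pd_comm (hf : ContDiff ℝ 2 f) (u v : ℝ × ℝ × ℝ) (p : ℝ × ℝ × ℝ) :
    fderiv ℝ (fun q => fderiv ℝ f q u) p v = fderiv ℝ (fun q => fderiv ℝ f q v) p u := by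
  have hF : ContDiff ℝ 1 (fderiv ℝ f) := hf.fderiv_right (by norm_num)
  have hd : ∀ x : ℝ × ℝ × ℝ, DifferentiableAt ℝ (fderiv ℝ f) x :=
    fun x => (hF.differentiable one_ne_zero) x
  have key : ∀ a b : ℝ × ℝ × ℝ,
      fderiv ℝ (fun q => fderiv ℝ f q a) p b = fderiv ℝ (fderiv ℝ f) p b a := by
    intro a b
    have := fderiv_clm_apply (hd p) (differentiableAt_const a)
    rw [this]
    simp
  rw [key u v, key v u]
  exact (hf.contDiffAt.isSymmSndFDerivAt (by norm_num)) v u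

lemma d12_comm (hf : ContDiff ℝ 2 f) (p : ℝ × ℝ × ℝ) : d1 (d2 f) p = d2 (d1 f) p :=
  pd_comm hf _ _ p
lemma d13_comm (hf : ContDiff ℝ 2 f) (p : ℝ × ℝ × ℝ) : d1 (d3 f) p = d3 (d1 f) p :=
  pd_comm hf _ _ p
lemma d23_comm (hf : ContDiff ℝ 2 f) (p : ℝ × ℝ × ℝ) : d2 (d3 f) p = d3 (d2 f) p :=
  pd_comm hf _ _ p

/-- A function on ℝ with zero derivative everywhere is constant. -/
lemma const_of_hasDerivAt_zero {g : ℝ → ℝ} (h : ∀ t, HasDerivAt g 0 t) (a b : ℝ) :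
    g a = g b :=
  is_const_of_deriv_eq_zero (fun t => (h t).differentiableAt) (fun t => (h t).deriv) a b

/-- A function with zero derivative on `Ioi 0` is constant there. -/
lemma const_of_hasDerivAt_zero_Ioi {g : ℝ → ℝ} (h : ∀ t ∈ Set.Ioi (0:ℝ), HasDerivAt g 0 t)
    {a b : ℝ} (ha : a ∈ Set.Ioi (0:ℝ)) (hb : b ∈ Set.Ioi (0:ℝ)) : g a = g b := by
  have hconv : Convex ℝ (Set.Ioi (0:ℝ)) := convex_Ioi 0
  have hdiff : DifferentiableOn ℝ g (Set.Ioi (0:ℝ)) :=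
    fun x hx => ((h x hx).differentiableAt).differentiableWithinAt
  refine hconv.is_const_of_fderivWithin_eq_zero hdiff (fun x hx => ?_) ha hb
  have hu : UniqueDiffWithinAt ℝ (Set.Ioi (0:ℝ)) x := (isOpen_Ioi.uniqueDiffOn) x hx
  have : fderivWithin ℝ g (Set.Ioi (0:ℝ)) x = fderiv ℝ g x :=
    ((h x hx).differentiableAt).fderivWithin hu
  rw [this]
  simp [(h x hx).deriv, ← toSpanSingleton_deriv]

/-- If two differentiable funcs agree on `ρ > 0`, so do their partials there. -/
lemma slice_congr_pos {X Y : ℝ × ℝ × ℝ → ℝ} (hX : Differentiable ℝ X) (hY : Differentiable ℝ Y)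
    (h0 : ∀ ρ : ℝ, 0 < ρ → ∀ v w : ℝ, X (ρ, v, w) = Y (ρ, v, w)) :
    ∀ ρ : ℝ, 0 < ρ → ∀ v w : ℝ, d1 X (ρ, v, w) = d1 Y (ρ, v, w) ∧
      d2 X (ρ, v, w) = d2 Y (ρ, v, w) ∧ d3 X (ρ, v, w) = d3 Y (ρ, v, w) := by
  intro ρ hρ v w
  refine ⟨?_, ?_, ?_⟩
  · have hX1 := hasDerivAt_slice1 (f := X) (hX _) (ρ := ρ) (v := v) (w := w)
    have hY1 := hasDerivAt_slice1 (f := Y) (hY _) (ρ := ρ) (v := v) (w := w)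
    have hev : (fun t => Y (t, v, w)) =ᶠ[nhds ρ] fun t => X (t, v, w) := by
      filter_upwards [isOpen_Ioi.mem_nhds hρ] with t ht using (h0 t ht v w).symm
    exact (hX1.congr_of_eventuallyEq hev).unique hY1
  · have hX2 := hasDerivAt_slice2 (f := X) (hX _) (ρ := ρ) (v := v) (w := w)
    have hY2 := hasDerivAt_slice2 (f := Y) (hY _) (ρ := ρ) (v := v) (w := w)
    have he : (fun t => X (ρ, t, w)) = fun t => Y (ρ, t, w) := funext fun t => h0 ρ hρ t w
    rw [he] at hX2; exact hX2.unique hY2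
  · have hX3 := hasDerivAt_slice3 (f := X) (hX _) (ρ := ρ) (v := v) (w := w)
    have hY3 := hasDerivAt_slice3 (f := Y) (hY _) (ρ := ρ) (v := v) (w := w)
    have he : (fun t => X (ρ, v, t)) = fun t => Y (ρ, v, t) := funext fun t => h0 ρ hρ v t
    rw [he] at hX3; exact hX3.unique hY3

lemma zero_w {X : ℝ × ℝ × ℝ → ℝ} (hX : Continuous X)
    (h : ∀ ρ : ℝ, 0 < ρ → ∀ v w : ℝ, w * X (ρ, v, w) = 0) :
    ∀ ρ : ℝ, 0 < ρ → ∀ v w : ℝ, X (ρ, v, w) = 0 := by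
  intro ρ hρ v w
  have key : ∀ t : ℝ, t ≠ 0 → X (ρ, v, t) = 0 := fun t ht =>
    (mul_eq_zero.1 (h ρ hρ v t)).resolve_left ht
  rcases eq_or_ne w 0 with rfl | hw
  · have hc : ContinuousAt (fun t : ℝ => X (ρ, v, t)) 0 :=
      (hX.comp (by continuity : Continuous fun t : ℝ => ((ρ, v, t) : ℝ × ℝ × ℝ))).continuousAt
    have h1 : Filter.Tendsto (fun t : ℝ => X (ρ, v, t)) (nhdsWithin 0 {0}ᶜ) (nhds (X (ρ, v, 0))) :=
      hc.tendsto.mono_left nhdsWithin_le_nhds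
    have h2 : Filter.Tendsto (fun t : ℝ => X (ρ, v, t)) (nhdsWithin 0 {0}ᶜ) (nhds 0) := by
      apply Filter.Tendsto.congr' _ tendsto_const_nhds
      filter_upwards [self_mem_nhdsWithin] with t ht using (key t ht).symm
    exact tendsto_nhds_unique h1 h2
  · exact key w hw

end aux

/-- Every C³ entropy of the 2d compressible potential flow system, i.e. every `η(ρ,v,w)`
satisfying `π' η_vv = ρ η_ρρ`, `π' η_ww = ρ η_ρρ`, `η_vw = 0`, `ρ η_ρw = w η_vv`,
`ρ η_ρv = v η_ww` (with enthalpy `pen = π`, `π' > 0`), is of the form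
`η = C⁰ + C^ρ ρ + C^v v + C^w w + C^E E` with `E = ∫^ρ π + ρ(v²+w²)/2`. -/
theorem stmt_13 (η : ℝ × ℝ × ℝ → ℝ) (pen : ℝ → ℝ)
    (hη : ContDiff ℝ 3 η) (hpen : ContDiff ℝ 1 pen)
    (hpen' : ∀ ρ : ℝ, 0 < ρ → 0 < deriv pen ρ)
    (h1 : ∀ ρ : ℝ, 0 < ρ → ∀ v w : ℝ,
      deriv pen ρ * d2 (d2 η) (ρ, v, w) = ρ * d1 (d1 η) (ρ, v, w))
    (h2 : ∀ ρ : ℝ, 0 < ρ → ∀ v w : ℝ,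
      deriv pen ρ * d3 (d3 η) (ρ, v, w) = ρ * d1 (d1 η) (ρ, v, w))
    (h3 : ∀ ρ : ℝ, 0 < ρ → ∀ v w : ℝ, d3 (d2 η) (ρ, v, w) = 0)
    (h4 : ∀ ρ : ℝ, 0 < ρ → ∀ v w : ℝ,
      ρ * d3 (d1 η) (ρ, v, w) = w * d2 (d2 η) (ρ, v, w))
    (h5 : ∀ ρ : ℝ, 0 < ρ → ∀ v w : ℝ,
      ρ * d2 (d1 η) (ρ, v, w) = v * d3 (d3 η) (ρ, v, w)) :
    ∃ C0 Cρ Cv Cw CE : ℝ, ∀ ρ : ℝ, 0 < ρ → ∀ v w : ℝ,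
      η (ρ, v, w) = C0 + Cρ * ρ + Cv * v + Cw * w
        + CE * ((∫ r in (1:ℝ)..ρ, pen r) + ρ * (v ^ 2 + w ^ 2) / 2) := by
  classical
  -- smoothness bookkeeping
  have hη2 : ContDiff ℝ 2 η := hη.of_le (by norm_num)
  have hηD : Differentiable ℝ η := hη.differentiable (by norm_num)
  have hd1C2 : ContDiff ℝ 2 (d1 η) := contDiff_d1 hη (by norm_num)
  have hd2C2 : ContDiff ℝ 2 (d2 η) := contDiff_d2 hη (by norm_num)
  have hd3C2 : ContDiff ℝ 2 (d3 η) := contDiff_d3 hη (by norm_num)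
  have hd1D : Differentiable ℝ (d1 η) := hd1C2.differentiable (by norm_num)
  have hd2D : Differentiable ℝ (d2 η) := hd2C2.differentiable (by norm_num)
  have hd3D : Differentiable ℝ (d3 η) := hd3C2.differentiable (by norm_num)
  have hAC1 : ContDiff ℝ 1 (d2 (d2 η)) := contDiff_d2 hd2C2 (by norm_num)
  have hBC1 : ContDiff ℝ 1 (d3 (d3 η)) := contDiff_d3 hd3C2 (by norm_num)
  have h32C1 : ContDiff ℝ 1 (d3 (d2 η)) := contDiff_d3 hd2C2 (by norm_num)
  have h31C1 : ContDiff ℝ 1 (d3 (d1 η)) := contDiff_d3 hd1C2 (by norm_num)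
  have h21C1 : ContDiff ℝ 1 (d2 (d1 η)) := contDiff_d2 hd1C2 (by norm_num)
  have hAD : Differentiable ℝ (d2 (d2 η)) := hAC1.differentiable one_ne_zero
  have hBD : Differentiable ℝ (d3 (d3 η)) := hBC1.differentiable one_ne_zero
  -- global symmetry of second partials
  have e12 : d1 (d2 η) = d2 (d1 η) := funext (d12_comm hη2)
  have e13 : d1 (d3 η) = d3 (d1 η) := funext (d13_comm hη2)
  have e23 : d2 (d3 η) = d3 (d2 η) := funext (d23_comm hη2)
  -- η_vv = η_ww on ρ > 0
  have hAB : ∀ ρ : ℝ, 0 < ρ → ∀ v w : ℝ, d2 (d2 η) (ρ,v,w) = d3 (d3 η) (ρ,v,w) := by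
    intro ρ hρ v w
    exact mul_left_cancel₀ (hpen' ρ hρ).ne' ((h1 ρ hρ v w).trans (h2 ρ hρ v w).symm)
  -- all partials of η_vw vanish on ρ > 0
  have hzero : ∀ ρ : ℝ, 0 < ρ → ∀ v w : ℝ, d1 (d3 (d2 η)) (ρ,v,w) = 0 ∧
      d2 (d3 (d2 η)) (ρ,v,w) = 0 ∧ d3 (d3 (d2 η)) (ρ,v,w) = 0 := by
    have hz := slice_congr_pos (X := d3 (d2 η)) (Y := fun _ => 0)
      (h32C1.differentiable one_ne_zero) (differentiable_const 0) h3
    intro ρ hρ v w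
    have h' := hz ρ hρ v w
    simpa [d1, d2, d3] using h'
  -- η_vvw = 0 on ρ > 0
  have hd3A : ∀ ρ : ℝ, 0 < ρ → ∀ v w : ℝ, d3 (d2 (d2 η)) (ρ,v,w) = 0 := by
    intro ρ hρ v w
    rw [← d23_comm hd2C2 (ρ,v,w)]
    exact (hzero ρ hρ v w).2.1
  -- differentiate h4 in w : ρ η_ρww = η_vv + w η_vvw
  have hstep4w : ∀ ρ : ℝ, 0 < ρ → ∀ v w : ℝ,
      ρ * d3 (d3 (d1 η)) (ρ,v,w) = d2 (d2 η) (ρ,v,w) + w * d3 (d2 (d2 η)) (ρ,v,w) := by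
    intro ρ hρ v w
    have hF : HasDerivAt (fun t => ρ * d3 (d1 η) (ρ,v,t)) (ρ * d3 (d3 (d1 η)) (ρ,v,w)) w :=
      (hasDerivAt_slice3 ((h31C1.differentiable one_ne_zero) _)).const_mul ρ
    have hG : HasDerivAt (fun t => t * d2 (d2 η) (ρ,v,t))
        (1 * d2 (d2 η) (ρ,v,w) + w * d3 (d2 (d2 η)) (ρ,v,w)) w :=
      (hasDerivAt_id w).mul (hasDerivAt_slice3 (hAD _))
    have he : (fun t => ρ * d3 (d1 η) (ρ,v,t)) = fun t => t * d2 (d2 η) (ρ,v,t) :=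
      funext fun t => h4 ρ hρ v t
    rw [he] at hF
    have := hF.unique hG
    linarith
  -- ρ (η_vv)_ρ = η_vv on ρ > 0
  have hODE : ∀ ρ : ℝ, 0 < ρ → ∀ v w : ℝ,
      ρ * d1 (d2 (d2 η)) (ρ,v,w) = d2 (d2 η) (ρ,v,w) := by
    intro ρ hρ v w
    have h' := hstep4w ρ hρ v w
    rw [hd3A ρ hρ v w] at h'
    have key : d3 (d3 (d1 η)) (ρ,v,w) = d1 (d2 (d2 η)) (ρ,v,w) := by
      rw [← e13, ← d13_comm hd3C2 (ρ,v,w)]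
      exact (slice_congr_pos hBD hAD (fun ρ h v w => (hAB ρ h v w).symm) ρ hρ v w).1
    rw [key] at h'
    linarith
  -- η_vvv = 0 on ρ > 0
  have hstep4v : ∀ ρ : ℝ, 0 < ρ → ∀ v w : ℝ, w * d2 (d2 (d2 η)) (ρ,v,w) = 0 := by
    intro ρ hρ v w
    have hF : HasDerivAt (fun t => ρ * d3 (d1 η) (ρ,t,w)) (ρ * d2 (d3 (d1 η)) (ρ,v,w)) v :=
      (hasDerivAt_slice2 ((h31C1.differentiable one_ne_zero) _)).const_mul ρ
    have hG : HasDerivAt (fun t => w * d2 (d2 η) (ρ,t,w)) (w * d2 (d2 (d2 η)) (ρ,v,w)) v :=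
      (hasDerivAt_slice2 (hAD _)).const_mul w
    have he : (fun t => ρ * d3 (d1 η) (ρ,t,w)) = fun t => w * d2 (d2 η) (ρ,t,w) :=
      funext fun t => h4 ρ hρ t w
    rw [he] at hF
    have huniq := hF.unique hG
    have hL : d2 (d3 (d1 η)) (ρ,v,w) = 0 := by
      rw [← e13, ← d12_comm hd3C2 (ρ,v,w), e23]
      exact (hzero ρ hρ v w).1
    rw [hL] at huniq
    linarith
  have hd2A : ∀ ρ : ℝ, 0 < ρ → ∀ v w : ℝ, d2 (d2 (d2 η)) (ρ,v,w) = 0 :=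
    zero_w ((contDiff_d2 hAC1 (by norm_num) : ContDiff ℝ 0 _).continuous) hstep4v
  -- η_vv = CE ρ
  set CE : ℝ := d2 (d2 η) (1,0,0) with hCEdef
  have hAval : ∀ ρ : ℝ, 0 < ρ → ∀ v w : ℝ, d2 (d2 η) (ρ,v,w) = CE * ρ := by
    intro ρ hρ v w
    have cw : d2 (d2 η) (ρ,v,w) = d2 (d2 η) (ρ,v,0) :=
      const_of_hasDerivAt_zero (fun t => by
        have h' := hasDerivAt_slice3 (hAD (ρ,v,t))
        rwa [hd3A ρ hρ v t] at h') w 0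
    have cv : d2 (d2 η) (ρ,v,0) = d2 (d2 η) (ρ,0,0) :=
      const_of_hasDerivAt_zero (fun t => by
        have h' := hasDerivAt_slice2 (hAD (ρ,t,0))
        rwa [hd2A ρ hρ t 0] at h') v 0
    have crad : d2 (d2 η) (ρ,0,0) * ρ⁻¹ = d2 (d2 η) (1,0,0) * (1:ℝ)⁻¹ := by
      refine const_of_hasDerivAt_zero_Ioi (g := fun s => d2 (d2 η) (s,0,0) * s⁻¹)
        (fun t ht => ?_) (Set.mem_Ioi.2 hρ)
        (Set.mem_Ioi.2 one_pos)
      have ht' : (0:ℝ) < t := Set.mem_Ioi.1 ht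
      have hmul : HasDerivAt (fun s => d2 (d2 η) (s,0,0) * s⁻¹)
          (d1 (d2 (d2 η)) (t,0,0) * t⁻¹ + d2 (d2 η) (t,0,0) * (-(t^2)⁻¹)) t :=
        (hasDerivAt_slice1 (hAD _)).mul (hasDerivAt_inv ht'.ne')
      have hode := hODE t ht' 0 0
      have ht0 : t ≠ 0 := ht'.ne'
      have hz : ∀ a b : ℝ, t * a = b → a * t⁻¹ + b * (-(t^2)⁻¹) = 0 := by
        intro a b hab
        rw [← hab]
        field_simp
        ring
      rwa [hz _ _ hode] at hmul
    rw [cw, cv]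
    have hρ0 : ρ ≠ 0 := hρ.ne'
    rw [inv_one, mul_one] at crad
    calc d2 (d2 η) (ρ,0,0) = d2 (d2 η) (ρ,0,0) * ρ⁻¹ * ρ := by
          rw [mul_assoc, inv_mul_cancel₀ hρ0, mul_one]
      _ = CE * ρ := by rw [crad]
  have hBval : ∀ ρ : ℝ, 0 < ρ → ∀ v w : ℝ, d3 (d3 η) (ρ,v,w) = CE * ρ := by
    intro ρ hρ v w
    rw [← hAB ρ hρ v w]; exact hAval ρ hρ v w
  -- second derivative values
  have hd2d1 : ∀ ρ : ℝ, 0 < ρ → ∀ v w : ℝ, d2 (d1 η) (ρ,v,w) = CE * v := by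
    intro ρ hρ v w
    have h' := h5 ρ hρ v w
    rw [hBval ρ hρ v w] at h'
    exact mul_left_cancel₀ hρ.ne' (h'.trans (by ring))
  have hd3d1 : ∀ ρ : ℝ, 0 < ρ → ∀ v w : ℝ, d3 (d1 η) (ρ,v,w) = CE * w := by
    intro ρ hρ v w
    have h' := h4 ρ hρ v w
    rw [hAval ρ hρ v w] at h'
    exact mul_left_cancel₀ hρ.ne' (h'.trans (by ring))
  have hd1d1 : ∀ ρ : ℝ, 0 < ρ → ∀ v w : ℝ, d1 (d1 η) (ρ,v,w) = CE * deriv pen ρ := by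
    intro ρ hρ v w
    have h' := h1 ρ hρ v w
    rw [hAval ρ hρ v w] at h'
    exact (mul_left_cancel₀ hρ.ne' ((by ring : ρ * (CE * deriv pen ρ) =
      deriv pen ρ * (CE * ρ)).trans h')).symm
  -- first derivative values
  set Cv : ℝ := d2 η (1,0,0) with hCvdef
  set Cw : ℝ := d3 η (1,0,0) with hCwdef
  set Cρ : ℝ := d1 η (1,0,0) - CE * pen 1 with hCρdef
  have hd2η : ∀ ρ : ℝ, 0 < ρ → ∀ v w : ℝ, d2 η (ρ,v,w) = Cv + CE * ρ * v := by
    intro ρ hρ v w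
    have step1 : d2 η (ρ,v,w) - CE * ρ * v = d2 η (ρ,0,w) - CE * ρ * 0 := by
      refine const_of_hasDerivAt_zero (g := fun t => d2 η (ρ,t,w) - CE * ρ * t) (fun t => ?_) v 0
      have h' : HasDerivAt (fun t => d2 η (ρ,t,w) - CE * ρ * t)
          (d2 (d2 η) (ρ,t,w) - CE * ρ * 1) t :=
        (hasDerivAt_slice2 (hd2D _)).sub ((hasDerivAt_id t).const_mul (CE * ρ))
      rw [hAval ρ hρ t w] at h'
      have e : CE * ρ - CE * ρ * 1 = 0 := by ring
      rwa [e] at h'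
    have step2 : d2 η (ρ,0,w) = d2 η (ρ,0,0) := by
      refine const_of_hasDerivAt_zero (g := fun t => d2 η (ρ,0,t)) (fun t => ?_) w 0
      have h' := hasDerivAt_slice3 (hd2D (ρ,0,t))
      rwa [h3 ρ hρ 0 t] at h'
    have step3 : d2 η (ρ,0,0) = Cv := by
      refine const_of_hasDerivAt_zero_Ioi (g := fun t => d2 η (t,0,0)) (fun t ht => ?_) (Set.mem_Ioi.2 hρ)
        (Set.mem_Ioi.2 one_pos)
      have ht' : (0:ℝ) < t := Set.mem_Ioi.1 ht
      have h' := hasDerivAt_slice1 (hd2D (t,0,0))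
      have hz : d1 (d2 η) (t,0,0) = 0 := by
        rw [e12]
        rw [hd2d1 t ht' 0 0]; ring
      rwa [hz] at h'
    rw [step2, step3] at step1
    linarith
  have hd3η : ∀ ρ : ℝ, 0 < ρ → ∀ v w : ℝ, d3 η (ρ,v,w) = Cw + CE * ρ * w := by
    intro ρ hρ v w
    have step1 : d3 η (ρ,v,w) - CE * ρ * w = d3 η (ρ,v,0) - CE * ρ * 0 := by
      refine const_of_hasDerivAt_zero (g := fun t => d3 η (ρ,v,t) - CE * ρ * t) (fun t => ?_) w 0
      have h' : HasDerivAt (fun t => d3 η (ρ,v,t) - CE * ρ * t)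
          (d3 (d3 η) (ρ,v,t) - CE * ρ * 1) t :=
        (hasDerivAt_slice3 (hd3D _)).sub ((hasDerivAt_id t).const_mul (CE * ρ))
      rw [hBval ρ hρ v t] at h'
      have e : CE * ρ - CE * ρ * 1 = 0 := by ring
      rwa [e] at h'
    have step2 : d3 η (ρ,v,0) = d3 η (ρ,0,0) := by
      refine const_of_hasDerivAt_zero (g := fun t => d3 η (ρ,t,0)) (fun t => ?_) v 0
      have h' := hasDerivAt_slice2 (hd3D (ρ,t,0))
      have hz : d2 (d3 η) (ρ,t,0) = 0 := by rw [e23]; exact h3 ρ hρ t 0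
      rwa [hz] at h'
    have step3 : d3 η (ρ,0,0) = Cw := by
      refine const_of_hasDerivAt_zero_Ioi (g := fun t => d3 η (t,0,0)) (fun t ht => ?_) (Set.mem_Ioi.2 hρ)
        (Set.mem_Ioi.2 one_pos)
      have ht' : (0:ℝ) < t := Set.mem_Ioi.1 ht
      have h' := hasDerivAt_slice1 (hd3D (t,0,0))
      have hz : d1 (d3 η) (t,0,0) = 0 := by
        rw [e13, hd3d1 t ht' 0 0]; ring
      rwa [hz] at h'
    rw [step2, step3] at step1
    linarith
  have hd1η : ∀ ρ : ℝ, 0 < ρ → ∀ v w : ℝ,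
      d1 η (ρ,v,w) = Cρ + CE * (pen ρ + (v * v + w * w) / 2) := by
    intro ρ hρ v w
    have step1 : d1 η (ρ,v,w) - CE * (w * w) / 2 = d1 η (ρ,v,0) - CE * (0 * 0) / 2 := by
      refine const_of_hasDerivAt_zero (g := fun t => d1 η (ρ,v,t) - CE * (t * t) / 2) (fun t => ?_) w 0
      have h' : HasDerivAt (fun t => d1 η (ρ,v,t) - CE * (t * t) / 2)
          (d3 (d1 η) (ρ,v,t) - CE * (1 * t + t * 1) / 2) t :=
        (hasDerivAt_slice3 (hd1D _)).sub
          ((((hasDerivAt_id t).mul (hasDerivAt_id t)).const_mul CE).div_const 2)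
      rw [hd3d1 ρ hρ v t] at h'
      have e : CE * t - CE * (1 * t + t * 1) / 2 = 0 := by ring
      rwa [e] at h'
    have step2 : d1 η (ρ,v,0) - CE * (v * v) / 2 = d1 η (ρ,0,0) - CE * (0 * 0) / 2 := by
      refine const_of_hasDerivAt_zero (g := fun t => d1 η (ρ,t,0) - CE * (t * t) / 2) (fun t => ?_) v 0
      have h' : HasDerivAt (fun t => d1 η (ρ,t,0) - CE * (t * t) / 2)
          (d2 (d1 η) (ρ,t,0) - CE * (1 * t + t * 1) / 2) t :=
        (hasDerivAt_slice2 (hd1D _)).sub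
          ((((hasDerivAt_id t).mul (hasDerivAt_id t)).const_mul CE).div_const 2)
      rw [hd2d1 ρ hρ t 0] at h'
      have e : CE * t - CE * (1 * t + t * 1) / 2 = 0 := by ring
      rwa [e] at h'
    have step3 : d1 η (ρ,0,0) - CE * pen ρ = d1 η (1,0,0) - CE * pen 1 := by
      refine const_of_hasDerivAt_zero_Ioi (g := fun t => d1 η (t,0,0) - CE * pen t) (fun t ht => ?_) (Set.mem_Ioi.2 hρ)
        (Set.mem_Ioi.2 one_pos)
      have ht' : (0:ℝ) < t := Set.mem_Ioi.1 ht
      have h' : HasDerivAt (fun t => d1 η (t,0,0) - CE * pen t)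
          (d1 (d1 η) (t,0,0) - CE * deriv pen t) t :=
        (hasDerivAt_slice1 (hd1D _)).sub
          (((hpen.differentiable one_ne_zero t).hasDerivAt).const_mul CE)
      rw [hd1d1 t ht' 0 0] at h'
      have e : CE * deriv pen t - CE * deriv pen t = 0 := by ring
      rwa [e] at h'
    have : Cρ = d1 η (1,0,0) - CE * pen 1 := hCρdef
    linarith
  -- integrate to get η itself
  set C0 : ℝ := η (1,0,0) - Cρ with hC0def
  refine ⟨C0, Cρ, Cv, Cw, CE, ?_⟩
  intro ρ hρ v w
  have E1 : η (ρ,v,w) - (Cw * w + CE * ρ * (w * w) / 2)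
      = η (ρ,v,0) - (Cw * 0 + CE * ρ * (0 * 0) / 2) := by
    refine const_of_hasDerivAt_zero (g := fun t => η (ρ,v,t) - (Cw * t + CE * ρ * (t * t) / 2)) (fun t => ?_) w 0
    have h' : HasDerivAt (fun t => η (ρ,v,t) - (Cw * t + CE * ρ * (t * t) / 2))
        (d3 η (ρ,v,t) - (Cw * 1 + CE * ρ * (1 * t + t * 1) / 2)) t :=
      (hasDerivAt_slice3 (hηD _)).sub (((hasDerivAt_id t).const_mul Cw).add
        ((((hasDerivAt_id t).mul (hasDerivAt_id t)).const_mul (CE * ρ)).div_const 2))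
    rw [hd3η ρ hρ v t] at h'
    have e : Cw + CE * ρ * t - (Cw * 1 + CE * ρ * (1 * t + t * 1) / 2) = 0 := by ring
    rwa [e] at h'
  have E2 : η (ρ,v,0) - (Cv * v + CE * ρ * (v * v) / 2)
      = η (ρ,0,0) - (Cv * 0 + CE * ρ * (0 * 0) / 2) := by
    refine const_of_hasDerivAt_zero (g := fun t => η (ρ,t,0) - (Cv * t + CE * ρ * (t * t) / 2)) (fun t => ?_) v 0
    have h' : HasDerivAt (fun t => η (ρ,t,0) - (Cv * t + CE * ρ * (t * t) / 2))
        (d2 η (ρ,t,0) - (Cv * 1 + CE * ρ * (1 * t + t * 1) / 2)) t :=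
      (hasDerivAt_slice2 (hηD _)).sub (((hasDerivAt_id t).const_mul Cv).add
        ((((hasDerivAt_id t).mul (hasDerivAt_id t)).const_mul (CE * ρ)).div_const 2))
    rw [hd2η ρ hρ t 0] at h'
    have e : Cv + CE * ρ * t - (Cv * 1 + CE * ρ * (1 * t + t * 1) / 2) = 0 := by ring
    rwa [e] at h'
  have E3 : η (ρ,0,0) - (Cρ * ρ + CE * ∫ r in (1:ℝ)..ρ, pen r)
      = η (1,0,0) - (Cρ * 1 + CE * ∫ r in (1:ℝ)..(1:ℝ), pen r) := by
    refine const_of_hasDerivAt_zero_Ioi (g := fun t => η (t,0,0) - (Cρ * t + CE * ∫ r in (1:ℝ)..t, pen r)) (fun t ht => ?_) (Set.mem_Ioi.2 hρ)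
      (Set.mem_Ioi.2 one_pos)
    have ht' : (0:ℝ) < t := Set.mem_Ioi.1 ht
    have hint : HasDerivAt (fun u => ∫ r in (1:ℝ)..u, pen r) (pen t) t :=
      (hpen.continuous.integral_hasStrictDerivAt 1 t).hasDerivAt
    have h' : HasDerivAt (fun t => η (t,0,0) - (Cρ * t + CE * ∫ r in (1:ℝ)..t, pen r))
        (d1 η (t,0,0) - (Cρ * 1 + CE * pen t)) t :=
      (hasDerivAt_slice1 (hηD _)).sub
        (((hasDerivAt_id t).const_mul Cρ).add (hint.const_mul CE))
    rw [hd1η t ht' 0 0] at h'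
    have e : Cρ + CE * (pen t + (0 * 0 + 0 * 0) / 2) - (Cρ * 1 + CE * pen t) = 0 := by ring
    rwa [e] at h'
  have hint0 : (∫ r in (1:ℝ)..(1:ℝ), pen r) = 0 := intervalIntegral.integral_same
  rw [hint0] at E3
  have hC0 : C0 = η (1,0,0) - Cρ := hC0def
  linear_combination E1 + E2 + E3 + hC0
end

section
/- If ψ^i_U(U) = η_U(U)·f^i_U(U) holds identically for C² functions η, ψ^i, f^i on an open convex subset of ℝ^m, then the matrix η_{UU}(U)·f^i_U(U) is symmetric at every point U. -/
/-- If `ψ_U = η_U f_U` holds identically on an open convex set for C² functions, then the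
matrix `η_{UU} f_U` is symmetric at every point: `D²η(f_U a, b) = D²η(f_U b, a)`. -/
theorem stmt_18 (m : ℕ) (s : Set (Fin m → ℝ)) (hs : IsOpen s) (hconv : Convex ℝ s)
    (η ψ : (Fin m → ℝ) → ℝ) (f : (Fin m → ℝ) → Fin m → ℝ)
    (hη : ContDiffOn ℝ 2 η s) (hψ : ContDiffOn ℝ 2 ψ s) (hf : ContDiffOn ℝ 2 f s)
    (hpair : ∀ U ∈ s, fderiv ℝ ψ U = (fderiv ℝ η U).comp (fderiv ℝ f U)) :
    ∀ U ∈ s, ∀ a b : Fin m → ℝ,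
      fderiv ℝ (fun y => fderiv ℝ η y b) U (fderiv ℝ f U a)
        = fderiv ℝ (fun y => fderiv ℝ η y a) U (fderiv ℝ f U b) := by
  intro U hU a b
  have hUs : s ∈ nhds U := hs.mem_nhds hU
  have hηa : ContDiffAt ℝ 2 η U := hη.contDiffAt hUs
  have hψa : ContDiffAt ℝ 2 ψ U := hψ.contDiffAt hUs
  have hfa : ContDiffAt ℝ 2 f U := hf.contDiffAt hUs
  have hdη : DifferentiableAt ℝ (fderiv ℝ η) U :=
    (hηa.fderiv_right (m := 1) le_rfl).differentiableAt one_ne_zero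
  have hdψ : DifferentiableAt ℝ (fderiv ℝ ψ) U :=
    (hψa.fderiv_right (m := 1) le_rfl).differentiableAt one_ne_zero
  have hdf : DifferentiableAt ℝ (fderiv ℝ f) U :=
    (hfa.fderiv_right (m := 1) le_rfl).differentiableAt one_ne_zero
  have Sη : IsSymmSndFDerivAt ℝ η U := hηa.isSymmSndFDerivAt minSmoothness_of_isRCLikeNormedField.le
  have Sψ : IsSymmSndFDerivAt ℝ ψ U := hψa.isSymmSndFDerivAt minSmoothness_of_isRCLikeNormedField.le
  have Sf : IsSymmSndFDerivAt ℝ f U := hfa.isSymmSndFDerivAt minSmoothness_of_isRCLikeNormedField.le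
  set H := fderiv ℝ (fderiv ℝ η) U with hH
  set F := fderiv ℝ (fderiv ℝ f) U with hF
  set T := fderiv ℝ (fderiv ℝ ψ) U with hT
  -- fderiv of `y ↦ L y w` for clm-valued differentiable `L` applied to a constant
  have const_apply : ∀ (g : (Fin m → ℝ) → ((Fin m → ℝ) →L[ℝ] ℝ))
      (hg : DifferentiableAt ℝ g U) (w : Fin m → ℝ),
      fderiv ℝ (fun y => g y w) U = (fderiv ℝ g U).flip w := by
    intro g hg w
    rw [fderiv_clm_apply hg (differentiableAt_const w)]
    simp
  have const_apply' : ∀ (g : (Fin m → ℝ) → ((Fin m → ℝ) →L[ℝ] (Fin m → ℝ)))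
      (hg : DifferentiableAt ℝ g U) (w : Fin m → ℝ),
      fderiv ℝ (fun y => g y w) U = (fderiv ℝ g U).flip w := by
    intro g hg w
    rw [fderiv_clm_apply hg (differentiableAt_const w)]
    simp
  -- key identity from differentiating the compatibility relation
  have key : ∀ v w : Fin m → ℝ,
      T v w = fderiv ℝ η U (F v w) + H v (fderiv ℝ f U w) := by
    intro v w
    have hev : (fun y => fderiv ℝ ψ y w) =ᶠ[nhds U]
        (fun y => fderiv ℝ η y (fderiv ℝ f y w)) := by
      filter_upwards [hUs] with y hy
      rw [hpair y hy]; rfl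
    have h1 : fderiv ℝ (fun y => fderiv ℝ ψ y w) U
        = fderiv ℝ (fun y => fderiv ℝ η y (fderiv ℝ f y w)) U := hev.fderiv_eq
    have h2 : fderiv ℝ (fun y => fderiv ℝ ψ y w) U = T.flip w := const_apply _ hdψ w
    have hu : DifferentiableAt ℝ (fun y => fderiv ℝ f y w) U :=
      hdf.clm_apply (differentiableAt_const w)
    have h3 : fderiv ℝ (fun y => fderiv ℝ η y (fderiv ℝ f y w)) U
        = (fderiv ℝ η U).comp (fderiv ℝ (fun y => fderiv ℝ f y w) U)
          + H.flip (fderiv ℝ f U w) := fderiv_clm_apply hdη hu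
    have h4 : fderiv ℝ (fun y => fderiv ℝ f y w) U = F.flip w := const_apply' _ hdf w
    have := h2.symm.trans (h1.trans h3)
    have hv := congrArg (fun (L : (Fin m → ℝ) →L[ℝ] ℝ) => L v) this
    simpa [h4] using hv
  have key2 : H a (fderiv ℝ f U b) = H b (fderiv ℝ f U a) := by
    have h1 := key a b
    have h2 := key b a
    rw [Sψ.eq a b, h2, Sf.eq a b] at h1
    linarith
  rw [const_apply _ hdη b, const_apply _ hdη a]
  simp only [ContinuousLinearMap.flip_apply]
  calc H (fderiv ℝ f U a) b = H b (fderiv ℝ f U a) := Sη.eq _ _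
    _ = H a (fderiv ℝ f U b) := key2.symm
    _ = H (fderiv ℝ f U b) a := Sη.eq _ _
end
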